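/- Let H = H_Γ be the right-angled Artin group of a finite graph Γ, and let C_1, …, C_r ⊆ V be cliques of Γ with ∩_{i=1}^r C_i = ∅. Then for any elements g_1, …, g_r ∈ H, the intersection ∩_{i=1}^r g_i [C_i] g_i^{−1} is the trivial subgroup. -/

import Mathlib

/-- The commutator relations of the right-angled Artin group of a graph. -/
def raagRels {V : Type} (G : SimpleGraph V) : Set (FreeGroup V) :=
  {w | ∃ u v : V, G.Adj u v ∧
    w = FreeGroup.of u * FreeGroup.of v * (FreeGroup.of u)⁻¹ * (FreeGroup.of v)⁻¹}

/-- The right-angled Artin group of a graph. -/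
abbrev RAAG {V : Type} (G : SimpleGraph V) := PresentedGroup (raagRels G)

/-- The generator of `RAAG G` corresponding to a vertex. -/
def raagGen {V : Type} (G : SimpleGraph V) (v : V) : RAAG G := PresentedGroup.of v

namespace Stmt4Aux

variable {V : Type} (G : SimpleGraph V)

lemma gen_commute {u v : V} (h : G.Adj u v) :
    Commute (raagGen G u) (raagGen G v) := by
  have h1 : raagGen G u * raagGen G v * (raagGen G u)⁻¹ * (raagGen G v)⁻¹ = 1 := by
    have h2 : (QuotientGroup.mk' (Subgroup.normalClosure (raagRels G)))
        (FreeGroup.of u * FreeGroup.of v * (FreeGroup.of u)⁻¹ * (FreeGroup.of v)⁻¹) = 1 := by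
      rw [QuotientGroup.mk'_apply, QuotientGroup.eq_one_iff]
      exact Subgroup.subset_normalClosure ⟨u, v, h, rfl⟩
    exact h2
  exact commutatorElement_eq_one_iff_commute.mp (by rw [commutatorElement_def]; exact h1)

variable [DecidableEq V]

/-- The retraction onto the subgroup generated by a set of vertices. -/
def ret (A : Finset V) : RAAG G →* RAAG G :=
  PresentedGroup.toGroup (f := fun v => if v ∈ A then raagGen G v else 1) (by
    rintro w ⟨u, v, huv, rfl⟩
    simp only [map_mul, map_inv, FreeGroup.lift_apply_of]
    by_cases hu : u ∈ A <;> by_cases hv : v ∈ A <;> simp only [if_pos, if_neg, hu, hv,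
      if_true, if_false, one_mul, mul_one, inv_one, mul_inv_cancel, inv_mul_cancel]
    · exact commutatorElement_eq_one_iff_commute.mpr (gen_commute G huv))

lemma ret_gen (A : Finset V) (v : V) :
    ret G A (raagGen G v) = if v ∈ A then raagGen G v else 1 :=
  PresentedGroup.toGroup.of _

lemma ret_fix {A : Finset V} {x : RAAG G}
    (hx : x ∈ Subgroup.closure (raagGen G '' (A : Set V))) : ret G A x = x := by
  induction hx using Subgroup.closure_induction with
  | mem y hy =>
    obtain ⟨v, hv, rfl⟩ := hy
    rw [ret_gen]; simp [Finset.mem_coe.mp hv]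
  | one => exact map_one _
  | mul a b _ _ ha hb => rw [map_mul, ha, hb]
  | inv a _ ha => rw [map_inv, ha]

lemma ret_mem {A B : Finset V} {x : RAAG G}
    (hx : x ∈ Subgroup.closure (raagGen G '' (B : Set V))) :
    ret G A x ∈ Subgroup.closure (raagGen G '' ((A ∩ B : Finset V) : Set V)) := by
  induction hx using Subgroup.closure_induction with
  | mem y hy =>
    obtain ⟨v, hv, rfl⟩ := hy
    rw [ret_gen]
    by_cases hvA : v ∈ A
    · rw [if_pos hvA]
      exact Subgroup.subset_closure ⟨v, by simp [hvA, hv], rfl⟩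
    · rw [if_neg hvA]; exact one_mem _
  | one => rw [map_one]; exact one_mem _
  | mul a b _ _ ha hb => rw [map_mul]; exact mul_mem ha hb
  | inv a _ ha => rw [map_inv]; exact inv_mem ha

/-- Key cancellation: if `x` is a conjugate of an element of `[A]` and the retraction onto
`A` kills `x`, then `x = 1`. -/
lemma eq_one_of_ret_eq_one {A : Finset V} {g x : RAAG G}
    (hx : x ∈ (Subgroup.closure (raagGen G '' (A : Set V))).map
      (MulAut.conj g).toMonoidHom)
    (h1 : ret G A x = 1) : x = 1 := by
  obtain ⟨c, hc, rfl⟩ := hx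
  simp only [MulEquiv.toMonoidHom_eq_coe, MonoidHom.coe_coe, MulAut.conj_apply] at *
  have h2 : ret G A g * c * (ret G A g)⁻¹ = 1 := by
    simpa [map_mul, map_inv, ret_fix G hc] using h1
  have hc1 : c = 1 := by
    have := congrArg (fun y => (ret G A g)⁻¹ * y * ret G A g) h2
    group at this
    simpa using this
  simp [hc1]

lemma main [Fintype V] (r : ℕ) (C : Fin r → Finset V) (hcl : ∀ i, G.IsClique ((C i : Set V)))
    (hempty : Finset.univ.inf C = ∅) (g : Fin r → RAAG G) (x : RAAG G)
    (hx : x ∈ ⨅ i, (Subgroup.closure (raagGen G '' (C i))).map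
        (MulAut.conj (g i)).toMonoidHom) : x = 1 := by
  induction r generalizing x with
  | zero =>
    -- the inf of the empty family is `univ`, so `V` is empty and `RAAG G` is trivial
    have hV : (Finset.univ : Finset V) = ∅ := by simpa using hempty
    have hVe : IsEmpty V := by
      constructor; intro v
      exact absurd (Finset.mem_univ v) (by simp [hV])
    have htop : (⊤ : Subgroup (RAAG G)) = ⊥ := by
      rw [← PresentedGroup.closure_range_of (raagRels G)]
      rw [Set.range_eq_empty]
      simp
    have : x ∈ (⊥ : Subgroup (RAAG G)) := htop ▸ Subgroup.mem_top x
    simpa using this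
  | succ n ih =>
    rcases Nat.eq_zero_or_pos n with hn | hn
    · subst hn
      have h0 : C 0 = ∅ := by simpa using hempty
      have := Subgroup.mem_iInf.mp hx 0
      rw [h0] at this
      simp only [Finset.coe_empty, Set.image_empty, Subgroup.closure_empty] at this
      obtain ⟨c, hc, rfl⟩ := this
      simp only [SetLike.mem_coe, Subgroup.mem_bot] at hc
      rw [hc]
      simp
    · set A := C (Fin.last n) with hA
      set C' : Fin n → Finset V := fun i => A ∩ C i.castSucc with hC'
      have hcl' : ∀ i, G.IsClique ((C' i : Set V)) := fun i =>
        (hcl i.castSucc).subset (by simp [hC', Set.inter_subset_right])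
      have hempty' : Finset.univ.inf C' = ∅ := by
        have hle : Finset.univ.inf C' ≤ Finset.univ.inf C := by
          refine Finset.le_inf ?_
          intro j _
          refine Fin.lastCases ?_ ?_ j
          · exact le_trans (Finset.inf_le (Finset.mem_univ ⟨0, hn⟩))
              Finset.inter_subset_left
          · intro i
            exact le_trans (Finset.inf_le (Finset.mem_univ i)) Finset.inter_subset_right
        exact Finset.subset_empty.mp (le_trans hle (le_of_eq hempty))
      set π := ret G A with hπ
      have hx' : π x ∈ ⨅ i, (Subgroup.closure (raagGen G '' (C' i))).map
          (MulAut.conj (π (g i.castSucc))).toMonoidHom := by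
        rw [Subgroup.mem_iInf]
        intro i
        have hxi := Subgroup.mem_iInf.mp hx i.castSucc
        obtain ⟨c, hc, rfl⟩ := hxi
        refine ⟨π c, ret_mem G hc, ?_⟩
        simp [map_mul, map_inv]
      have hπx : π x = 1 := ih C' hcl' hempty' (fun i => π (g i.castSucc)) (π x) hx'
      exact eq_one_of_ret_eq_one G (Subgroup.mem_iInf.mp hx (Fin.last n)) hπx

end Stmt4Aux

theorem stmt4 {V : Type} [Fintype V] [DecidableEq V] (G : SimpleGraph V) (r : ℕ)
    (C : Fin r → Finset V) (hcl : ∀ i, G.IsClique ((C i : Set V)))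
    (hempty : Finset.univ.inf C = ∅) (g : Fin r → RAAG G) :
    (⨅ i, (Subgroup.closure (raagGen G '' (C i))).map
        (MulAut.conj (g i)).toMonoidHom) = ⊥ := by
  rw [eq_bot_iff]
  intro x hx
  simpa using Stmt4Aux.main G r C hcl hempty g x hx
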